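/- For m ≥ 1 and n ≥ 0, E[(S_m)_n] = ∑_{k=0}^n s(n,k)·S(m+k,m)/C(m+k,m), where S_m is the sum of m independent uniform [0,1] random variables and (x)_n is the falling factorial. -/

import Mathlib

open MeasureTheory Finset

/-- Falling factorial `(θ)_n = θ(θ-1)⋯(θ-n+1)`. -/
noncomputable def fallFac (θ : ℝ) (n : ℕ) : ℝ := ∏ i ∈ Finset.range n, (θ - i)

/-- Signed Stirling numbers of the first kind. -/
noncomputable def stirlingFst (n k : ℕ) : ℝ := (descPochhammer ℝ n).coeff k

/-- Stirling numbers of the second kind. -/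
def stirlingSnd : ℕ → ℕ → ℕ
  | 0, 0 => 1
  | 0, _ + 1 => 0
  | _ + 1, 0 => 0
  | n + 1, k + 1 => (k + 1) * stirlingSnd n (k + 1) + stirlingSnd n k

/-! ### The uniform measure and the cube measure -/

noncomputable def unif : Measure ℝ := volume.restrict (Set.Icc 0 1)

instance : IsProbabilityMeasure unif := ⟨by simp [unif, Real.volume_Icc]⟩

noncomputable abbrev cube (m : ℕ) : Measure (Fin m → ℝ) := Measure.pi fun _ => unif

instance (m : ℕ) : IsProbabilityMeasure (cube m) := by unfold cube; infer_instance

lemma unif_compl : unif (Set.Icc (0:ℝ) 1)ᶜ = 0 := by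
  simp [unif, Measure.restrict_apply (measurableSet_Icc.compl)]

lemma cube_ae_mem (m : ℕ) :
    ∀ᵐ x ∂cube m, ∀ i, x i ∈ Set.Icc (0:ℝ) 1 := by
  rw [MeasureTheory.ae_all_iff]
  intro i
  have h : cube m {x | x i ∉ Set.Icc (0:ℝ) 1} = 0 := by
    have heq : {x : Fin m → ℝ | x i ∉ Set.Icc (0:ℝ) 1}
        = Set.pi Set.univ (Function.update (fun _ => Set.univ) i (Set.Icc (0:ℝ) 1)ᶜ) := by
      ext x
      simp only [Set.mem_pi, Set.mem_univ, forall_true_left, Set.mem_setOf_eq]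
      constructor
      · intro hx j
        rcases eq_or_ne j i with rfl | hj
        · simpa [Function.update] using hx
        · simp [Function.update, hj]
      · intro hx
        have := hx i
        simpa [Function.update] using this
    rw [heq, cube, Measure.pi_pi]
    refine Finset.prod_eq_zero (Finset.mem_univ i) ?_
    simpa [Function.update] using unif_compl
  filter_upwards [measure_eq_zero_iff_ae_notMem.mp h] with x hx using not_not.mp hx

lemma integrable_cube {m : ℕ} {G : (Fin m → ℝ) → ℝ} (hG : Continuous G) :
    Integrable G (cube m) := by
  have hK : IsCompact (Set.pi Set.univ fun _ : Fin m => Set.Icc (0:ℝ) 1) :=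
    isCompact_univ_pi fun _ => isCompact_Icc
  obtain ⟨C, hC⟩ := hK.exists_bound_of_continuousOn hG.continuousOn
  refine (integrable_const C).mono' hG.aestronglyMeasurable ?_
  filter_upwards [cube_ae_mem m] with x hx
  exact hC x (by intro i _; exact hx i)

lemma integrable_unif {g : ℝ → ℝ} (hg : Continuous g) : Integrable g unif :=
  hg.integrableOn_Icc

lemma continuous_sum (m : ℕ) : Continuous fun x : Fin m → ℝ => ∑ i, x i :=
  continuous_finset_sum _ fun i _ => continuous_apply i

/-! ### One-dimensional integrals -/

lemma unif_pow (s : ℝ) (k : ℕ) :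
    ∫ u, (u + s) ^ k ∂unif = ((s+1)^(k+1) - s^(k+1))/(k+1) := by
  rw [show unif = volume.restrict (Set.Icc 0 1) from rfl]
  simp_rw [add_comm]
  rw [MeasureTheory.integral_Icc_eq_integral_Ioc,
    ← intervalIntegral.integral_of_le zero_le_one,
    intervalIntegral.integral_comp_add_left (fun x => x ^ k) s]
  simp [integral_pow]

lemma unif_mul_pow (s : ℝ) (k : ℕ) :
    ∫ u, u * (u + s) ^ k ∂unif
      = ((s+1)^(k+2) - s^(k+2))/((k:ℝ)+2)
        - ((s+1)^(k+2) - (s+1)^(k+1) - s^(k+2))/((k:ℝ)+1) := by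
  have h1 : ∀ u : ℝ, u * (u+s)^k = (u+s)^(k+1) - s * (u+s)^k := by
    intro u; ring
  simp_rw [h1]
  rw [integral_sub (integrable_unif (by continuity)) (integrable_unif (by continuity)),
    MeasureTheory.integral_const_mul, unif_pow, unif_pow]
  have hk1 : ((k:ℝ)+1) ≠ 0 := by positivity
  have hk2 : ((k:ℝ)+2) ≠ 0 := by positivity
  push_cast
  field_simp
  ring

/-! ### Splitting off one coordinate -/

lemma split (m : ℕ) (f : ℝ → ℝ → ℝ) (hf : Continuous (Function.uncurry f)) :
    ∫ x, f (x 0) (∑ j, x (Fin.succ j)) ∂cube (m+1)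
      = ∫ y, ∫ u, f u (∑ j, y j) ∂unif ∂cube m := by
  have mp := measurePreserving_piFinSuccAbove (fun _ : Fin (m+1) => unif) 0
  have hcont : Continuous fun p : ℝ × (Fin m → ℝ) => f p.1 (∑ j, p.2 j) :=
    hf.comp (continuous_fst.prodMk ((continuous_sum m).comp continuous_snd))
  have hInt : Integrable (fun p : ℝ × (Fin m → ℝ) => f p.1 (∑ j, p.2 j))
      (unif.prod (cube m)) := by
    rw [show cube m = Measure.pi fun _ : Fin m => unif from rfl, ← mp.map_eq,
      (MeasurableEquiv.piFinSuccAbove (fun _ => ℝ) 0).measurableEmbedding.integrable_map_iff]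
    exact integrable_cube (hcont.comp (Continuous.prodMk (continuous_apply (0 : Fin (m+1)))
      (continuous_pi fun j => continuous_apply _)))
  calc ∫ x, f (x 0) (∑ j, x (Fin.succ j)) ∂cube (m+1)
      = ∫ x, (fun p : ℝ × (Fin m → ℝ) => f p.1 (∑ j, p.2 j))
          ((MeasurableEquiv.piFinSuccAbove (fun _ => ℝ) 0) x) ∂cube (m+1) := by
        refine integral_congr_ae (Filter.Eventually.of_forall fun x => ?_)
        simp [MeasurableEquiv.piFinSuccAbove, Fin.removeNth, Fin.zero_succAbove, Fin.tail]
    _ = ∫ p, f p.1 (∑ j, p.2 j) ∂(unif.prod (cube m)) := by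
        exact mp.integral_comp' (fun p : ℝ × (Fin m → ℝ) => f p.1 (∑ j, p.2 j))
    _ = ∫ u, ∫ y, f u (∑ j, y j) ∂cube m ∂unif := by exact integral_prod _ hInt
    _ = ∫ y, ∫ u, f u (∑ j, y j) ∂unif ∂cube m := by exact integral_integral_swap hInt

/-! ### Moments of the coordinate sum -/

noncomputable def momA (m k : ℕ) : ℝ := ∫ x, (∑ i, x i) ^ k ∂cube m

noncomputable def momC (m k : ℕ) : ℝ := ∫ y, (∑ i, y i + 1) ^ k ∂cube m

lemma momA_zero (m : ℕ) : momA m 0 = 1 := by simp [momA]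

lemma momA_zero_left (k : ℕ) : momA 0 (k+1) = 0 := by
  simp [momA]

lemma integrable_momC (m j : ℕ) : Integrable (fun y : Fin m → ℝ => (∑ i, y i + 1)^j) (cube m) :=
  integrable_cube (((continuous_sum m).add continuous_const).pow j)

lemma integrable_momA (m j : ℕ) : Integrable (fun y : Fin m → ℝ => (∑ i, y i)^j) (cube m) :=
  integrable_cube ((continuous_sum m).pow j)

lemma split_pow (m k : ℕ) :
    momA (m+1) k = (momC m (k+1) - momA m (k+1))/((k:ℝ)+1) := by
  have h := split m (fun u s => (u + s)^k)
    (by exact (continuous_fst.add continuous_snd).pow k)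
  rw [momA]
  simp_rw [Fin.sum_univ_succ]
  rw [h]
  have h2 : ∀ y : Fin m → ℝ, ∫ u, (fun u s => (u + s)^k) u (∑ j, y j) ∂unif
      = ((∑ j, y j + 1)^(k+1) - (∑ j, y j)^(k+1))/((k:ℝ)+1) := by
    intro y
    rw [unif_pow]
  rw [integral_congr_ae (Filter.Eventually.of_forall h2)]
  rw [MeasureTheory.integral_div, integral_sub (integrable_momC m (k+1)) (integrable_momA m (k+1))]
  rfl

lemma momC_eq (m k : ℕ) :
    momC m (k+1) = momA m (k+1) + ((k:ℝ)+1) * momA (m+1) k := by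
  have h := split_pow m k
  have hk : ((k:ℝ)+1) ≠ 0 := by positivity
  field_simp at h
  linarith [h]

lemma exch (m k : ℕ) (j : Fin (m+1)) :
    ∫ x, x j * (∑ i, x i) ^ k ∂cube (m+1) = ∫ x, x 0 * (∑ i, x i) ^ k ∂cube (m+1) := by
  set σ : Equiv.Perm (Fin (m+1)) := Equiv.swap 0 j with hσ
  have mp := measurePreserving_piCongrLeft (fun _ : Fin (m+1) => unif) σ
  have key := mp.integral_comp' (f := MeasurableEquiv.piCongrLeft (fun _ => ℝ) σ)
    (fun x : Fin (m+1) → ℝ => x j * (∑ i, x i) ^ k)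
  rw [← key]
  refine integral_congr_ae (Filter.Eventually.of_forall fun x => ?_)
  have happ : ∀ i, (MeasurableEquiv.piCongrLeft (fun _ => ℝ) σ) x i = x (σ.symm i) := by
    intro i
    simp [MeasurableEquiv.piCongrLeft, Equiv.piCongrLeft]
  dsimp only
  rw [happ]
  have hsum : ∑ i, (MeasurableEquiv.piCongrLeft (fun _ => ℝ) σ) x i = ∑ i, x i := by
    simp_rw [happ]
    exact Equiv.sum_comp σ.symm x
  rw [hsum]
  simp [hσ]

lemma momA_succ_eq (m k : ℕ) :
    momA (m+1) (k+1) = ((m:ℝ)+1) * ∫ x, x 0 * (∑ i, x i) ^ k ∂cube (m+1) := by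
  have h1 : momA (m+1) (k+1)
      = ∑ j : Fin (m+1), ∫ x, x j * (∑ i, x i) ^ k ∂cube (m+1) := by
    rw [momA, ← integral_finset_sum]
    · refine integral_congr_ae (Filter.Eventually.of_forall fun x => ?_)
      dsimp only
      rw [pow_succ', Finset.sum_mul]
    · intro j _
      exact integrable_cube ((continuous_apply j).mul ((continuous_sum _).pow k))
  rw [h1]
  rw [Finset.sum_congr rfl fun j _ => exch m k j]
  simp [mul_comm]

lemma momE_eq (m k : ℕ) :
    ∫ x, x 0 * (∑ i, x i) ^ k ∂cube (m+1)
      = (momC m (k+2) - momA m (k+2))/((k:ℝ)+2)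
        - (momC m (k+2) - momC m (k+1) - momA m (k+2))/((k:ℝ)+1) := by
  have h := split m (fun u s => u * (u + s)^k)
    (by exact continuous_fst.mul ((continuous_fst.add continuous_snd).pow k))
  have hL : ∫ x, x 0 * (∑ i, x i) ^ k ∂cube (m+1)
      = ∫ x, (fun u s => u * (u + s)^k) (x 0) (∑ j, x (Fin.succ j)) ∂cube (m+1) := by
    refine integral_congr_ae (Filter.Eventually.of_forall fun x => ?_)
    dsimp only
    rw [Fin.sum_univ_succ]
  rw [hL, h]
  have hinner : ∀ y : Fin m → ℝ,
      ∫ u, (fun u s => u * (u + s)^k) u (∑ j, y j) ∂unif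
        = ((∑ j, y j + 1)^(k+2) - (∑ j, y j)^(k+2))/((k:ℝ)+2)
          - ((∑ j, y j + 1)^(k+2) - (∑ j, y j + 1)^(k+1) - (∑ j, y j)^(k+2))/((k:ℝ)+1) := by
    intro y
    rw [unif_mul_pow]
  rw [integral_congr_ae (Filter.Eventually.of_forall hinner)]
  have i1 := integrable_momC m (k+2)
  have i2 := integrable_momC m (k+1)
  have i3 := integrable_momA m (k+2)
  have s1 : Integrable (fun y : Fin m → ℝ =>
      (∑ i, y i + 1)^(k+2) - (∑ i, y i)^(k+2)) (cube m) := i1.sub i3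
  have s2 : Integrable (fun y : Fin m → ℝ =>
      (∑ i, y i + 1)^(k+2) - (∑ i, y i + 1)^(k+1) - (∑ i, y i)^(k+2)) (cube m) :=
    (i1.sub i2).sub i3
  have j1 : Integrable (fun y : Fin m → ℝ =>
      ((∑ i, y i + 1)^(k+2) - (∑ i, y i)^(k+2))/((k:ℝ)+2)) (cube m) := s1.div_const _
  have j2 : Integrable (fun y : Fin m → ℝ =>
      ((∑ i, y i + 1)^(k+2) - (∑ i, y i + 1)^(k+1) - (∑ i, y i)^(k+2))/((k:ℝ)+1)) (cube m) :=
    s2.div_const _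
  have s12 : Integrable (fun y : Fin m → ℝ =>
      (∑ i, y i + 1)^(k+2) - (∑ i, y i + 1)^(k+1)) (cube m) := i1.sub i2
  rw [integral_sub j1 j2, MeasureTheory.integral_div, MeasureTheory.integral_div,
    integral_sub i1 i3, integral_sub s12 i3, integral_sub i1 i2]
  rfl

lemma momE_eq' (m k : ℕ) :
    ∫ x, x 0 * (∑ i, x i) ^ k ∂cube (m+1)
      = momA (m+1) (k+1)
        - (momC m (k+2) - momC m (k+1) - momA m (k+2))/((k:ℝ)+1) := by
  rw [momE_eq m k]
  have h := split_pow m (k+1)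
  rw [show k+1+1 = k+2 from rfl] at h
  have heq : (momC m (k+2) - momA m (k+2))/((k:ℝ)+2) = momA (m+1) (k+1) := by
    rw [h]
    push_cast
    ring
  rw [heq]

lemma momA_rec (m k : ℕ) :
    ((m:ℝ)+(k:ℝ)+2) * momA (m+1) (k+1)
      = ((m:ℝ)+1) * (momA m (k+1) + ((k:ℝ)+1) * momA (m+1) k) := by
  have h1 := momA_succ_eq m k
  rw [momE_eq' m k] at h1
  have h3 := momC_eq m (k+1)
  have h4 := momC_eq m k
  have hc3 : momC m (k+2) = momA m (k+2) + ((k:ℝ)+2) * momA (m+1) (k+1) := by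
    rw [show k+2 = (k+1)+1 from rfl, h3]
    push_cast
    ring
  rw [hc3, h4] at h1
  have hk1 : ((k:ℝ)+1) ≠ 0 := by positivity
  field_simp at h1
  nlinarith [h1]

/-! ### The Stirling side -/

noncomputable def stirB (m k : ℕ) : ℝ :=
  (stirlingSnd (m+k) m : ℝ) / ((m+k).choose m : ℝ)

lemma stirlingSnd_eq_zero_of_lt : ∀ {n k : ℕ}, n < k → stirlingSnd n k = 0
  | 0, _+1, _ => rfl
  | n+1, k+1, h => by
    rw [stirlingSnd, stirlingSnd_eq_zero_of_lt (by omega),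
      stirlingSnd_eq_zero_of_lt (by omega)]
    ring

lemma stirlingSnd_self : ∀ m : ℕ, stirlingSnd m m = 1
  | 0 => rfl
  | m+1 => by
    rw [stirlingSnd, stirlingSnd_self m, stirlingSnd_eq_zero_of_lt (by omega)]
    ring

lemma stirB_zero (m : ℕ) : stirB m 0 = 1 := by
  simp [stirB, stirlingSnd_self]

lemma stirB_left (k : ℕ) : stirB 0 (k+1) = 0 := by
  simp [stirB, show stirlingSnd (k+1) 0 = 0 from rfl]

lemma stirB_rec (m k : ℕ) :
    ((m:ℝ)+(k:ℝ)+2) * stirB (m+1) (k+1)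
      = ((m:ℝ)+1) * (stirB m (k+1) + ((k:ℝ)+1) * stirB (m+1) k) := by
  have e1 : stirB (m+1) (k+1)
      = ((stirlingSnd (m+k+2) (m+1) : ℕ) : ℝ) / (((m+k+2).choose (m+1) : ℕ) : ℝ) := by
    rw [stirB, show (m+1)+(k+1) = m+k+2 from by omega]
  have e2 : stirB m (k+1)
      = ((stirlingSnd (m+k+1) m : ℕ) : ℝ) / (((m+k+1).choose m : ℕ) : ℝ) := by
    rw [stirB, show m+(k+1) = m+k+1 from by omega]
  have e3 : stirB (m+1) k
      = ((stirlingSnd (m+k+1) (m+1) : ℕ) : ℝ) / (((m+k+1).choose (m+1) : ℕ) : ℝ) := by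
    rw [stirB, show (m+1)+k = m+k+1 from by omega]
  have hs : stirlingSnd (m+k+2) (m+1)
      = (m+1) * stirlingSnd (m+k+1) (m+1) + stirlingSnd (m+k+1) m := by
    rw [show m+k+2 = (m+k+1)+1 from rfl]
    rfl
  -- choose identities
  have I2 : (m+1) * (m+k+2).choose (m+1) = (m+k+2) * ((m+k+1).choose m) := by
    have h := Nat.add_one_mul_choose_eq (m+k+1) m
    rw [show m+k+2 = m+k+1+1 by omega, mul_comm]
    exact h.symm
  have I1 : (k+1) * (m+k+2).choose (m+1) = (m+k+2) * ((m+k+1).choose (m+1)) := by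
    have h1 := Nat.add_one_mul_choose_eq (m+k+1) k
    have h2 : (m+k+1).choose k = (m+k+1).choose (m+1) := by
      have h := Nat.choose_symm (show m+1 ≤ m+k+1 by omega)
      rw [show m+k+1-(m+1) = k by omega] at h
      exact h
    have h3 : (m+k+1+1).choose (k+1) = (m+k+1+1).choose (m+1) := by
      have h := Nat.choose_symm (show m+1 ≤ m+k+1+1 by omega)
      rw [show m+k+1+1-(m+1) = k+1 by omega] at h
      exact h
    rw [h2, h3] at h1
    rw [show m+k+2 = m+k+1+1 by omega, mul_comm]
    exact h1.symm
  have hc1 : (((m+k+2).choose (m+1) : ℕ) : ℝ) ≠ 0 :=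
    Nat.cast_ne_zero.mpr (Nat.choose_pos (by omega)).ne'
  have hc2 : (((m+k+1).choose m : ℕ) : ℝ) ≠ 0 :=
    Nat.cast_ne_zero.mpr (Nat.choose_pos (by omega)).ne'
  have hc3 : (((m+k+1).choose (m+1) : ℕ) : ℝ) ≠ 0 :=
    Nat.cast_ne_zero.mpr (Nat.choose_pos (by omega)).ne'
  have I1R : ((k:ℝ)+1) * (((m+k+2).choose (m+1) : ℕ) : ℝ)
      = ((m:ℝ)+(k:ℝ)+2) * (((m+k+1).choose (m+1) : ℕ) : ℝ) := by
    exact_mod_cast congrArg (Nat.cast : ℕ → ℝ) I1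
  have I2R : ((m:ℝ)+1) * (((m+k+2).choose (m+1) : ℕ) : ℝ)
      = ((m:ℝ)+(k:ℝ)+2) * (((m+k+1).choose m : ℕ) : ℝ) := by
    exact_mod_cast congrArg (Nat.cast : ℕ → ℝ) I2
  have hsR : ((stirlingSnd (m+k+2) (m+1) : ℕ) : ℝ)
      = ((m:ℝ)+1) * ((stirlingSnd (m+k+1) (m+1) : ℕ) : ℝ)
        + ((stirlingSnd (m+k+1) m : ℕ) : ℝ) := by
    exact_mod_cast congrArg (Nat.cast : ℕ → ℝ) hs
  rw [e1, e2, e3, hsR]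
  set a := ((stirlingSnd (m+k+1) (m+1) : ℕ) : ℝ)
  set b := ((stirlingSnd (m+k+1) m : ℕ) : ℝ)
  set c1 := (((m+k+2).choose (m+1) : ℕ) : ℝ)
  set c2 := (((m+k+1).choose m : ℕ) : ℝ)
  set c3 := (((m+k+1).choose (m+1) : ℕ) : ℝ)
  field_simp
  linear_combination (-(((m:ℝ)+1) * a * c2)) * I1R - (b * c3) * I2R

lemma momA_eq_stirB : ∀ m k : ℕ, momA m k = stirB m k := by
  intro m
  induction m with
  | zero =>
    intro k
    cases k with
    | zero => rw [momA_zero, stirB_zero]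
    | succ k => rw [momA_zero_left, stirB_left]
  | succ m ih =>
    intro k
    induction k with
    | zero => rw [momA_zero, stirB_zero]
    | succ k ihk =>
      have h := momA_rec m k
      rw [ih (k+1), ihk] at h
      have hb := stirB_rec m k
      have hne : ((m:ℝ)+(k:ℝ)+2) ≠ 0 := by positivity
      exact mul_left_cancel₀ hne (h.trans hb.symm)

/-! ### Falling factorial expansion -/

lemma fallFac_eval (θ : ℝ) (n : ℕ) : fallFac θ n = (descPochhammer ℝ n).eval θ := by
  induction n with
  | zero => simp [fallFac]
  | succ n ih =>
    rw [fallFac, Finset.prod_range_succ, descPochhammer_succ_eval, ← fallFac, ih]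

lemma fallFac_expand (θ : ℝ) (n : ℕ) :
    fallFac θ n = ∑ k ∈ Finset.range (n+1), stirlingFst n k * θ^k := by
  rw [fallFac_eval,
    Polynomial.eval_eq_sum_range' (n := n+1) (by rw [descPochhammer_natDegree]; omega) θ]
  rfl

lemma continuous_fallFac_sum (m n : ℕ) :
    Continuous fun x : Fin m → ℝ => fallFac (∑ i, x i) n := by
  have : Continuous fun θ : ℝ => fallFac θ n :=
    continuous_finset_prod _ fun i _ => continuous_id.sub continuous_const
  exact this.comp (continuous_sum m)

/-! ### Reduction from an abstract probability space -/

lemma map_eq_cube {Ω : Type*} [MeasurableSpace Ω] (μ : Measure Ω) [IsProbabilityMeasure μ]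
    (m : ℕ) (U : Fin m → Ω → ℝ) (hmeas : ∀ i, Measurable (U i))
    (hindep : ProbabilityTheory.iIndepFun U μ)
    (hunif : ∀ i, Measure.map (U i) μ = volume.restrict (Set.Icc (0:ℝ) 1)) :
    μ.map (fun ω i => U i ω) = cube m := by
  refine (Measure.pi_eq fun s hs => ?_).symm
  rw [Measure.map_apply (measurable_pi_lambda _ hmeas) (MeasurableSet.univ_pi hs)]
  have hpre : (fun ω i => U i ω) ⁻¹' Set.pi Set.univ s = ⋂ i ∈ Finset.univ, U i ⁻¹' s i := by
    ext ω
    simp [Set.mem_pi]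
  rw [hpre, hindep.measure_inter_preimage_eq_mul Finset.univ (fun i _ => hs i)]
  refine Finset.prod_congr rfl fun i _ => ?_
  rw [show unif = volume.restrict (Set.Icc (0:ℝ) 1) from rfl, ← hunif i,
    Measure.map_apply (hmeas i) (hs i)]

theorem factorial_moment_sum_uniform
    {Ω : Type*} [MeasurableSpace Ω] (μ : Measure Ω) [IsProbabilityMeasure μ]
    (m : ℕ) (hm : 1 ≤ m) (n : ℕ) (U : Fin m → Ω → ℝ) (hmeas : ∀ i, Measurable (U i))
    (hindep : ProbabilityTheory.iIndepFun U μ)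
    (hunif : ∀ i, Measure.map (U i) μ = volume.restrict (Set.Icc (0:ℝ) 1)) :
    ∫ ω, fallFac (∑ i, U i ω) n ∂μ =
      ∑ k ∈ Finset.range (n + 1),
        stirlingFst n k * (stirlingSnd (m + k) m : ℝ) / ((m + k).choose m : ℝ) := by
  have hmap := map_eq_cube μ m U hmeas hindep hunif
  have step1 : ∫ ω, fallFac (∑ i, U i ω) n ∂μ = ∫ x, fallFac (∑ i, x i) n ∂cube m := by
    rw [← hmap, integral_map (measurable_pi_lambda _ hmeas).aemeasurable
      (continuous_fallFac_sum m n).aestronglyMeasurable]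
  have step2 : ∫ x, fallFac (∑ i, x i) n ∂cube m
      = ∑ k ∈ Finset.range (n+1), stirlingFst n k * momA m k := by
    simp_rw [fallFac_expand]
    rw [integral_finset_sum _ (fun k _ => (integrable_momA m k).const_mul _)]
    exact Finset.sum_congr rfl fun k _ => MeasureTheory.integral_const_mul _ _
  rw [step1, step2]
  refine Finset.sum_congr rfl fun k _ => ?_
  rw [momA_eq_stirB m k, stirB, mul_div_assoc]
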